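/- Let R be a commutative ring, n ≥ 1 a natural number, and a_0, a_1, ..., a_n elements of R. Then the sum over all tuples (i_1, ..., i_n) of nonnegative integers with i_1 + ... + i_n = n of the element a_{i_1} * a_{i_2} * ... * a_{i_n} * (i_n - 1) is zero in R (where i_n - 1 ∈ ℤ acts on R by integer scalar multiplication). -/

import Mathlib

open Finset Finset.Nat

lemma csv_swap {R : Type*} [CommRing R] (n : ℕ) (a : ℕ → R) (j j' : Fin n) :
    ∑ x ∈ antidiagonalTuple n n, ((x j : ℤ) - 1) • ∏ i, a (x i)
      = ∑ x ∈ antidiagonalTuple n n, ((x j' : ℤ) - 1) • ∏ i, a (x i) := by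
  refine Finset.sum_nbij' (fun x => x ∘ Equiv.swap j j') (fun x => x ∘ Equiv.swap j j')
    ?_ ?_ ?_ ?_ ?_
  · intro x hx
    rw [mem_antidiagonalTuple] at hx ⊢
    simpa using (Equiv.sum_comp (Equiv.swap j j') x).trans hx
  · intro x hx
    rw [mem_antidiagonalTuple] at hx ⊢
    simpa using (Equiv.sum_comp (Equiv.swap j j') x).trans hx
  · intro x _
    funext i
    simp [Equiv.swap_apply_self]
  · intro x _
    funext i
    simp [Equiv.swap_apply_self]
  · intro x _
    simp only [Function.comp]
    have h1 : (x ∘ Equiv.swap j j') j' = x j := by simp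
    have h2 : ∏ i, a ((x ∘ Equiv.swap j j') i) = ∏ i, a (x i) :=
      Equiv.prod_comp (Equiv.swap j j') (fun i => a (x i))
    simp only [Function.comp] at h1 h2
    rw [h1, h2]

lemma csv_nsmul {R : Type*} [CommRing R] (n : ℕ) (hn : 0 < n) (a : ℕ → R) :
    n • (∑ x ∈ antidiagonalTuple n n,
      ((x ⟨n - 1, by omega⟩ : ℤ) - 1) • ∏ i, a (x i)) = 0 := by
  set j0 : Fin n := ⟨n - 1, by omega⟩
  have h1 : n • (∑ x ∈ antidiagonalTuple n n, ((x j0 : ℤ) - 1) • ∏ i, a (x i))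
      = ∑ j : Fin n, ∑ x ∈ antidiagonalTuple n n, ((x j : ℤ) - 1) • ∏ i, a (x i) := by
    rw [Finset.sum_congr rfl (fun j _ => (csv_swap n a j j0))]
    simp [Finset.sum_const]
  rw [h1, Finset.sum_comm]
  refine Finset.sum_eq_zero (fun x hx => ?_)
  rw [mem_antidiagonalTuple] at hx
  rw [← Finset.sum_smul]
  have : ∑ j : Fin n, ((x j : ℤ) - 1) = 0 := by
    rw [Finset.sum_sub_distrib]
    simp [← Nat.cast_sum, hx]
  rw [this, zero_smul]

lemma csv_poly (n : ℕ) (hn : 0 < n) :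
    ∑ x ∈ antidiagonalTuple n n,
      ((x ⟨n - 1, by omega⟩ : ℤ) - 1) • ∏ i, (MvPolynomial.X (x i) : MvPolynomial ℕ ℤ) = 0 := by
  have h := csv_nsmul n hn (fun i => (MvPolynomial.X i : MvPolynomial ℕ ℤ))
  have hn0 : (n : MvPolynomial ℕ ℤ) ≠ 0 := Nat.cast_ne_zero.mpr (by omega)
  rw [nsmul_eq_mul, mul_eq_zero] at h
  exact h.resolve_left hn0

theorem comp_sum_vanishing {R : Type*} [CommRing R] (n : ℕ) (hn : 1 ≤ n) (a : ℕ → R) :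
    ∑ x ∈ Finset.Nat.antidiagonalTuple n n,
      ((x ⟨n - 1, by omega⟩ : ℤ) - 1) • ∏ i, a (x i) = 0 := by
  have h := congrArg (MvPolynomial.eval₂Hom (Int.castRingHom R) a) (csv_poly n hn)
  simpa [map_sum, map_zsmul, map_prod] using h
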